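/- Let X, Z be finite sets of cardinality n with symmetric non-negative functions, f : X → Z a bijection with |d_X(x,y) − d_Z(f(x), f(y))| < ε for all x, y, and q ≥ 1 a natural number. Then the induced matching distance satisfies d_f^q(B(X), B(Z)) = ( Σ_{a,b ∈ ℝ≥0} M_f(a,b) · |a−b|^q )^{1/q} ≤ (n−1)^{1/q} · ε. -/

import Mathlib

open scoped NNReal
open Module
-- defs copied
def VR {Z : Type*} (d : Z → Z → ℝ≥0) (r : ℝ≥0) : SimpleGraph Z where
  Adj z z' := z ≠ z' ∧ 0 < r ∧ d z z' ≤ r ∧ d z' z ≤ r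
  symm := by constructor; intro z z' h; exact ⟨h.1.symm, h.2.1, h.2.2.2, h.2.2.1⟩
  loopless := by constructor; intro z h; exact h.1 rfl
def VRc {Z : Type*} (d : Z → Z → ℝ≥0) (r : ℝ≥0) : SimpleGraph Z where
  Adj z z' := z ≠ z' ∧ d z z' ≤ r ∧ d z' z ≤ r
  symm := by constructor; intro z z' h; exact ⟨h.1.symm, h.2.2, h.2.1⟩
  loopless := by constructor; intro z h; exact h.1 rfl
lemma VR_mono {Z : Type*} (d : Z → Z → ℝ≥0) {r s : ℝ≥0} (hrs : r ≤ s) :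
    VR d r ≤ VR d s := by
  intro a b hab
  exact ⟨hab.1, hab.2.1.trans_le hrs, hab.2.2.1.trans hrs, hab.2.2.2.trans hrs⟩

noncomputable def rho {Z : Type*} [Fintype Z] (G : SimpleGraph Z) :
    (Z → ZMod 2) →ₗ[ZMod 2] (G.ConnectedComponent → ZMod 2) where
  toFun v c :=
    ∑ z ∈ @Finset.filter _ (fun z => G.connectedComponentMk z = c)
      (Classical.decPred _) Finset.univ, v z
  map_add' := by
    intro v w; funext c; simp [Finset.sum_add_distrib]
  map_smul' := by
    intro m v; funext c; simp [Finset.mul_sum]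

lemma mem_ker_rho_iff {Z : Type*} [Fintype Z] (G : SimpleGraph Z) (v : Z → ZMod 2) :
    v ∈ LinearMap.ker (rho G) ↔ ∀ c, ∑ z ∈ @Finset.filter _ (fun z => G.connectedComponentMk z = c)
      (Classical.decPred _) Finset.univ, v z = 0 := by
  rw [LinearMap.mem_ker, funext_iff]
  simp [rho]

lemma ker_rho_mono {Z : Type*} [Fintype Z] {G H : SimpleGraph Z} (hGH : G ≤ H) :
    LinearMap.ker (rho G) ≤ LinearMap.ker (rho H) := by
  classical
  intro v hv
  rw [mem_ker_rho_iff] at hv ⊢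
  intro c'
  haveI : Fintype G.ConnectedComponent :=
    Fintype.ofSurjective G.connectedComponentMk (fun c => c.exists_rep)
  set φ : G.ConnectedComponent → H.ConnectedComponent :=
    SimpleGraph.ConnectedComponent.map (SimpleGraph.Hom.ofLE hGH) with hφ
  have hφmk : ∀ z, φ (G.connectedComponentMk z) = H.connectedComponentMk z := fun z => rfl
  have key := Finset.sum_fiberwise_of_maps_to (g := G.connectedComponentMk)
    (s := Finset.univ.filter (fun z => H.connectedComponentMk z = c'))
    (t := Finset.univ.filter (fun c => φ c = c'))
    (f := v) ?_
  · rw [← key]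
    apply Finset.sum_eq_zero
    intro c hc
    simp only [Finset.mem_filter, Finset.mem_univ, true_and] at hc
    have : (Finset.univ.filter (fun z => H.connectedComponentMk z = c')).filter
        (fun z => G.connectedComponentMk z = c) = Finset.univ.filter (fun z => G.connectedComponentMk z = c) := by
      rw [Finset.filter_filter]
      apply Finset.filter_congr
      intro z _
      simp only [and_iff_right_iff_imp]
      intro hz
      rw [← hc, ← hz, hφmk]
    rw [this]
    simpa using hv c
  · intro z hz
    simp only [Finset.mem_filter, Finset.mem_univ, true_and] at hz ⊢
    rw [hφmk, hz]
noncomputable def kerVR {Z : Type*} [Fintype Z] (d : Z → Z → ℝ≥0) (r : ℝ≥0) :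
    Submodule (ZMod 2) (Z → ZMod 2) := LinearMap.ker (rho (VR d r))
noncomputable def kerP {Z : Type*} [Fintype Z] (d : Z → Z → ℝ≥0) (b : ℝ≥0) :
    Submodule (ZMod 2) (Z → ZMod 2) := LinearMap.ker (rho (VRc d b))
noncomputable def kerM {Z : Type*} [Fintype Z] (d : Z → Z → ℝ≥0) (b : ℝ≥0) :
    Submodule (ZMod 2) (Z → ZMod 2) := ⨆ r : {r : ℝ≥0 // r < b}, kerVR d (r : ℝ≥0)

lemma VR_le_VRc {Z : Type*} (d : Z → Z → ℝ≥0) {r s : ℝ≥0} (hrs : r ≤ s) :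
    VR d r ≤ VRc d s := fun _ _ hab => ⟨hab.1, hab.2.2.1.trans hrs, hab.2.2.2.trans hrs⟩

lemma VRc_le_VR {Z : Type*} (d : Z → Z → ℝ≥0) {r s : ℝ≥0} (hrs : r < s) :
    VRc d r ≤ VR d s := fun _ _ hab =>
  ⟨hab.1, lt_of_le_of_lt (zero_le : 0 ≤ r) hrs, hab.2.1.trans hrs.le, hab.2.2.trans hrs.le⟩

lemma kerM_le_kerP {Z : Type*} [Fintype Z] (d : Z → Z → ℝ≥0) (b : ℝ≥0) :
    kerM d b ≤ kerP d b :=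
  iSup_le fun r => ker_rho_mono (VR_le_VRc d r.2.le)

lemma kerP_lt_le_kerM {Z : Type*} [Fintype Z] (d : Z → Z → ℝ≥0) {r b : ℝ≥0} (hrb : r < b) :
    kerP d r ≤ kerM d b := by
  obtain ⟨s, hs1, hs2⟩ := exists_between hrb
  exact le_trans (ker_rho_mono (VRc_le_VR d hs1))
    (le_iSup (fun r : {r : ℝ≥0 // r < b} => kerVR d (r : ℝ≥0)) ⟨s, hs2⟩)

/-- interleaving inclusion -/
lemma kerP_le_kerM_eps {Z : Type*} [Fintype Z] (d1 d2 : Z → Z → ℝ≥0) (ε : ℝ≥0) (hε : 0 < ε)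
    (h : ∀ x y, (d2 x y : ℝ) < (d1 x y : ℝ) + ε) {b c : ℝ≥0} (hbc : b + ε ≤ c) :
    kerP d1 b ≤ kerM d2 c := by
  classical
  have hc : 0 < c := lt_of_lt_of_le (by positivity) hbc
  set S : Finset (Z × Z) := Finset.univ.filter (fun p => d1 p.1 p.2 ≤ b) with hS
  set r0 : ℝ≥0 := S.sup (fun p => d2 p.1 p.2) with hr0
  have hr0c : r0 < c := by
    rw [hr0, Finset.sup_lt_iff (by simpa using hc)]
    intro p hp
    simp only [hS, Finset.mem_filter] at hp
    have := h p.1 p.2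
    have h2 : (d2 p.1 p.2 : ℝ) < b + ε := lt_of_lt_of_le this (by
      have : (d1 p.1 p.2 : ℝ) ≤ b := by exact_mod_cast hp.2
      linarith)
    have h3 : (d2 p.1 p.2 : ℝ) < c := lt_of_lt_of_le h2 (by exact_mod_cast hbc)
    exact_mod_cast h3
  set r : ℝ≥0 := max r0 (c / 2) with hr
  have hrc : r < c := max_lt hr0c (NNReal.half_lt_self hc.ne')
  have hrpos : 0 < r := lt_of_lt_of_le (by positivity) (le_max_right _ _)
  have hsub : VRc d1 b ≤ VR d2 r := by
    intro z z' hzz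
    refine ⟨hzz.1, hrpos, ?_, ?_⟩
    · exact le_trans (Finset.le_sup (f := fun p => d2 p.1 p.2)
        (by simp [hS, hzz.2.1] : (z, z') ∈ S)) (le_max_left _ _)
    · exact le_trans (Finset.le_sup (f := fun p => d2 p.1 p.2)
        (by simp [hS, hzz.2.2] : (z', z) ∈ S)) (le_max_left _ _)
  exact le_trans (ker_rho_mono hsub)
    (le_iSup (fun r : {r : ℝ≥0 // r < c} => kerVR d2 (r : ℝ≥0)) ⟨r, hrc⟩)

/-- kernel dimension bound -/
lemma finrank_ker_rho_le {Z : Type*} [Fintype Z] [Nonempty Z] (G : SimpleGraph Z) :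
    finrank (ZMod 2) (LinearMap.ker (rho G)) ≤ Fintype.card Z - 1 := by
  classical
  have hrn := LinearMap.finrank_range_add_finrank_ker (rho G)
  have hpi : finrank (ZMod 2) (Z → ZMod 2) = Fintype.card Z := by simp
  obtain ⟨z⟩ := ‹Nonempty Z›
  have hne : rho G (fun w => if w = z then 1 else 0) ≠ 0 := by
    intro h0
    have := congrFun h0 (G.connectedComponentMk z)
    simp only [rho, LinearMap.coe_mk, AddHom.coe_mk, Pi.zero_apply] at this
    rw [Finset.filter_congr_decidable, Finset.sum_ite_eq' _ z (fun _ => (1 : ZMod 2))] at this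
    simp at this
  have hrange : 1 ≤ finrank (ZMod 2) (LinearMap.range (rho G)) := by
    by_contra hlt
    push_neg at hlt
    interval_cases hr : finrank (ZMod 2) (LinearMap.range (rho G))
    · rw [Submodule.finrank_eq_zero] at hr
      exact hne (by
        have : rho G (fun w => if w = z then 1 else 0) ∈ LinearMap.range (rho G) :=
          LinearMap.mem_range_self _ _
        rw [hr] at this
        simpa using this)
  omega
lemma sum_jump_le_max (g g' : ℝ≥0 → ℕ) (h1 : ∀ b, g' b ≤ g b)
    (h2 : ∀ r b, r < b → g r ≤ g' b) (s : Finset ℝ≥0) :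
    ∀ hs : s.Nonempty, ∑ x ∈ s, (g x - g' x) ≤ g (s.max' hs) := by
  induction s using Finset.strongInduction with
  | _ s ih =>
    intro hs
    set b := s.max' hs with hb
    have hbmem : b ∈ s := s.max'_mem hs
    rw [← Finset.sum_erase_add _ _ hbmem]
    rcases (s.erase b).eq_empty_or_nonempty with he | hne
    · rw [he]
      simpa using Nat.sub_le (g b) (g' b)
    · have hss : s.erase b ⊂ s := Finset.erase_ssubset hbmem
      have hmax' := ih (s.erase b) hss hne
      have hlt : (s.erase b).max' hne < b := by
        have hmem := (s.erase b).max'_mem hne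
        have h1' := Finset.mem_of_mem_erase hmem
        have h2' := Finset.ne_of_mem_erase hmem
        exact lt_of_le_of_ne (s.le_max' _ h1') h2'
      have := h2 _ _ hlt
      have := h1 b
      omega

lemma sum_jump_le (g g' : ℝ≥0 → ℕ) (h1 : ∀ b, g' b ≤ g b)
    (h2 : ∀ r b, r < b → g r ≤ g' b) (m : ℕ) (hm : ∀ x, g x ≤ m) (s : Finset ℝ≥0) :
    ∑ x ∈ s, (g x - g' x) ≤ m := by
  rcases s.eq_empty_or_nonempty with he | hne
  · simp [he]
  · exact le_trans (sum_jump_le_max g g' h1 h2 s hne) (hm _)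

lemma jump_support_finite (g g' : ℝ≥0 → ℕ) (h1 : ∀ b, g' b ≤ g b)
    (h2 : ∀ r b, r < b → g r ≤ g' b) (m : ℕ) (hm : ∀ x, g x ≤ m) :
    {x : ℝ≥0 | g' x < g x}.Finite := by
  by_contra hinf
  rw [← Set.not_infinite, not_not] at hinf
  obtain ⟨t, hts, htc⟩ := hinf.exists_subset_card_eq (m + 1)
  have hone : ∀ x ∈ t, 1 ≤ g x - g' x := by
    intro x hx
    have := hts hx
    simp only [Set.mem_setOf_eq] at this
    omega
  have : (m + 1 : ℕ) ≤ ∑ x ∈ t, (g x - g' x) := by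
    calc (m+1 : ℕ) = ∑ _x ∈ t, 1 := by rw [Finset.sum_const, htc]; ring
    _ ≤ _ := Finset.sum_le_sum hone
  have := sum_jump_le g g' h1 h2 m hm t
  omega
/-- Multiplicity of the death value `a` in the barcode: `m(a) = dim ker⁺_a − dim ker⁻_a`. -/
noncomputable def mult {Z : Type*} [Fintype Z] (d : Z → Z → ℝ≥0) (a : ℝ≥0) : ℕ :=
  finrank (ZMod 2) (kerP d a) - finrank (ZMod 2) (kerM d a)

noncomputable def blockFn {Z : Type*} [Fintype Z] (dX dZ : Z → Z → ℝ≥0) (a b : ℝ≥0) : ℕ :=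
  finrank (ZMod 2)
    ((↥(kerP dX a ⊓ kerP dZ b)) ⧸
      ((kerM dX a ⊓ kerP dZ b ⊔ kerP dX a ⊓ kerM dZ b).comap
        (kerP dX a ⊓ kerP dZ b).subtype))

set_option synthInstance.maxHeartbeats 1000000 in
set_option maxHeartbeats 1000000 in
lemma blockFn_add_le {Z : Type*} [Fintype Z] (dX dZ : Z → Z → ℝ≥0) (a b : ℝ≥0) :
    blockFn dX dZ a b + finrank (ZMod 2) ↥(kerM dX a ⊔ (kerP dX a ⊓ kerM dZ b))
      ≤ finrank (ZMod 2) ↥(kerM dX a ⊔ (kerP dX a ⊓ kerP dZ b)) := by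
  set A := kerP dX a
  set A' := kerM dX a
  set B := kerP dZ b
  set B' := kerM dZ b
  have hA : A' ≤ A := kerM_le_kerP dX a
  have hB : B' ≤ B := kerM_le_kerP dZ b
  have hSle : A' ⊓ B ⊔ A ⊓ B' ≤ A ⊓ B :=
    sup_le (inf_le_inf_right _ hA) (inf_le_inf_left _ hB)
  have hq := Submodule.finrank_quotient_add_finrank
      ((A' ⊓ B ⊔ A ⊓ B').comap (A ⊓ B).subtype)
  have hfr : finrank (ZMod 2) ↥((A' ⊓ B ⊔ A ⊓ B').comap (A ⊓ B).subtype)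
      = finrank (ZMod 2) ↥(A' ⊓ B ⊔ A ⊓ B') :=
    (Submodule.comapSubtypeEquivOfLe hSle).finrank_eq
  have e1 : blockFn dX dZ a b + finrank (ZMod 2) ↥(A' ⊓ B ⊔ A ⊓ B')
      = finrank (ZMod 2) ↥(A ⊓ B) := by
    rw [← hfr]
    exact hq
  have e2 := Submodule.finrank_sup_add_finrank_inf_eq A' (A ⊓ B)
  have e3 := Submodule.finrank_sup_add_finrank_inf_eq A' (A ⊓ B')
  have e4 := Submodule.finrank_sup_add_finrank_inf_eq (A' ⊓ B) (A ⊓ B')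
  have eq5 : A' ⊓ (A ⊓ B) = A' ⊓ B := by rw [← inf_assoc, inf_eq_left.mpr hA]
  have eq6 : A' ⊓ (A ⊓ B') = A' ⊓ B' := by rw [← inf_assoc, inf_eq_left.mpr hA]
  have eq7 : (A' ⊓ B) ⊓ (A ⊓ B') = A' ⊓ B' := by
    apply le_antisymm
    · exact le_inf (inf_le_left.trans inf_le_left) (inf_le_right.trans inf_le_right)
    · exact le_inf (le_inf inf_le_left ((inf_le_right : A' ⊓ B' ≤ B').trans hB))
        (le_inf (inf_le_left.trans hA) inf_le_right)
  rw [eq5] at e2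
  rw [eq6] at e3
  rw [eq7] at e4
  omega
set_option synthInstance.maxHeartbeats 1000000 in
set_option maxHeartbeats 1000000 in
lemma blockFn_eq_zero {Z : Type*} [Fintype Z] (dX dZ : Z → Z → ℝ≥0) (ε : ℝ≥0) (hε : 0 < ε)
    (h : ∀ x y, |(dX x y : ℝ) - (dZ x y : ℝ)| < ε) (a b : ℝ≥0)
    (hab : ¬ (|(a : ℝ) - (b : ℝ)| ≤ (ε : ℝ))) : blockFn dX dZ a b = 0 := by
  push_neg at hab
  have hsub : kerP dX a ⊓ kerP dZ b ≤ kerM dX a ⊓ kerP dZ b ⊔ kerP dX a ⊓ kerM dZ b := by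
    rcases le_or_gt a b with hle | hlt
    · -- a ≤ b, so ε < b - a, i.e. a + ε ≤ b : kerP dX a ≤ kerM dZ b
      have habs : (ε : ℝ) < (b : ℝ) - a := by
        rw [abs_of_nonpos (by simp [hle] : (a:ℝ) - b ≤ 0)] at hab; linarith
      have hbc : a + ε ≤ b := by
        rw [← NNReal.coe_le_coe]; push_cast; linarith
      have hincl : kerP dX a ≤ kerM dZ b :=
        kerP_le_kerM_eps dX dZ ε hε (fun x y => by have := abs_lt.mp (h x y); linarith) hbc
      exact le_trans (le_inf inf_le_left (inf_le_left.trans hincl)) le_sup_right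
    · -- b < a, so b + ε ≤ a : kerP dZ b ≤ kerM dX a
      have habs : (ε : ℝ) < (a : ℝ) - b := by
        rw [abs_of_nonneg (by simp [hlt.le] : (0:ℝ) ≤ (a:ℝ) - b)] at hab; linarith
      have hbc : b + ε ≤ a := by
        rw [← NNReal.coe_le_coe]; push_cast; linarith
      have hincl : kerP dZ b ≤ kerM dX a :=
        kerP_le_kerM_eps dZ dX ε hε (fun x y => by have := abs_lt.mp (h x y); linarith) hbc
      exact le_trans (le_inf (inf_le_right.trans hincl) inf_le_right) le_sup_left
  have htop : (kerM dX a ⊓ kerP dZ b ⊔ kerP dX a ⊓ kerM dZ b).comap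
      (kerP dX a ⊓ kerP dZ b).subtype = ⊤ :=
    Submodule.comap_subtype_eq_top.mpr hsub
  unfold blockFn
  rw [htop]
  haveI : Subsingleton ((↥(kerP dX a ⊓ kerP dZ b)) ⧸
      (⊤ : Submodule (ZMod 2) ↥(kerP dX a ⊓ kerP dZ b))) :=
    Submodule.Quotient.subsingleton_iff.mpr rfl
  exact finrank_zero_of_subsingleton
set_option maxHeartbeats 2000000 in
set_option synthInstance.maxHeartbeats 1000000 in
/-- continuity of the induced matching distance: if
`|d_X(x,y) − d_Z(f x, f y)| < ε` for all `x, y` (with `f` the relabelling bijection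
`x_i ↦ z_i`), then `d_f^q(B(X), B(Z)) = (Σ_{a,b} M_f(a,b)·|a−b|^q)^{1/q} ≤ (n−1)^{1/q}·ε`. -/
theorem stmt11 {n : ℕ} (hn : 0 < n) (dX dZ : Fin n → Fin n → ℝ≥0)
    (hsX : ∀ i j, dX i j = dX j i) (hsZ : ∀ i j, dZ i j = dZ j i)
    (ε : ℝ≥0) (hε : 0 < ε)
    (h : ∀ x y : Fin n, |(dX x y : ℝ) - (dZ x y : ℝ)| < ε)
    (q : ℕ) (hq : 1 ≤ q) :
    (∑ᶠ p : ℝ≥0 × ℝ≥0, (blockFn dX dZ p.1 p.2 : ℝ) * |(p.1 : ℝ) - (p.2 : ℝ)| ^ q)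
        ^ ((1 : ℝ) / q)
      ≤ ((n : ℝ) - 1) ^ ((1 : ℝ) / q) * ε := by
  classical
  haveI : Nonempty (Fin n) := ⟨⟨0, hn⟩⟩
  -- dimension step functions
  set G1 : ℝ≥0 → ℕ := fun a => finrank (ZMod 2) (kerP dX a) with hG1def
  set G1' : ℝ≥0 → ℕ := fun a => finrank (ZMod 2) (kerM dX a) with hG1'def
  set g : ℝ≥0 → ℝ≥0 → ℕ := fun a b =>
    finrank (ZMod 2) ↥(kerM dX a ⊔ (kerP dX a ⊓ kerP dZ b)) - finrank (ZMod 2) (kerM dX a)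
    with hgdef
  set g' : ℝ≥0 → ℝ≥0 → ℕ := fun a b =>
    finrank (ZMod 2) ↥(kerM dX a ⊔ (kerP dX a ⊓ kerM dZ b)) - finrank (ZMod 2) (kerM dX a)
    with hg'def
  have hG1h1 : ∀ a, G1' a ≤ G1 a := fun a => Submodule.finrank_mono (kerM_le_kerP dX a)
  have hG1h2 : ∀ r a, r < a → G1 r ≤ G1' a := fun r a hra =>
    Submodule.finrank_mono (kerP_lt_le_kerM dX hra)
  have hG1bd : ∀ a, G1 a ≤ n - 1 := by
    intro a
    have := finrank_ker_rho_le (VRc dX a)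
    show finrank (ZMod 2) (LinearMap.ker (rho (VRc dX a))) ≤ n - 1
    simpa [Fintype.card_fin] using this
  have hgh1 : ∀ a b, g' a b ≤ g a b := by
    intro a b
    exact Nat.sub_le_sub_right (Submodule.finrank_mono
      (sup_le_sup_left (inf_le_inf_left _ (kerM_le_kerP dZ b)) _)) _
  have hgh2 : ∀ a r b, r < b → g a r ≤ g' a b := by
    intro a r b hrb
    exact Nat.sub_le_sub_right (Submodule.finrank_mono
      (sup_le_sup_left (inf_le_inf_left _ (kerP_lt_le_kerM dZ hrb)) _)) _
  have hgbd : ∀ a b, g a b ≤ G1 a - G1' a := by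
    intro a b
    exact Nat.sub_le_sub_right (Submodule.finrank_mono
      (sup_le (kerM_le_kerP dX a) inf_le_left)) _ |>.trans
      (Nat.sub_le_sub_left (le_refl _) _) |>.trans (le_refl _)
  have hblock : ∀ a b, blockFn dX dZ a b ≤ g a b - g' a b := by
    intro a b
    have h0 := blockFn_add_le dX dZ a b
    have l1 : finrank (ZMod 2) (kerM dX a) ≤
        finrank (ZMod 2) ↥(kerM dX a ⊔ (kerP dX a ⊓ kerM dZ b)) :=
      Submodule.finrank_mono le_sup_left
    have l2 : finrank (ZMod 2) ↥(kerM dX a ⊔ (kerP dX a ⊓ kerM dZ b)) ≤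
        finrank (ZMod 2) ↥(kerM dX a ⊔ (kerP dX a ⊓ kerP dZ b)) :=
      Submodule.finrank_mono (sup_le_sup_left (inf_le_inf_left _ (kerM_le_kerP dZ b)) _)
    simp only [hgdef, hg'def]
    omega
  -- finiteness
  have hSb : ∀ a, {b : ℝ≥0 | g' a b < g a b}.Finite := fun a =>
    jump_support_finite (g a) (g' a) (hgh1 a) (hgh2 a) (G1 a - G1' a) (hgbd a)
  have hSa : {a : ℝ≥0 | G1' a < G1 a}.Finite :=
    jump_support_finite G1 G1' hG1h1 hG1h2 (n - 1) hG1bd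
  have hT : (⋃ a ∈ {a : ℝ≥0 | G1' a < G1 a}, {b : ℝ≥0 | g' a b < g a b}).Finite :=
    hSa.biUnion (fun a _ => hSb a)
  have hbmem : ∀ a b, blockFn dX dZ a b ≠ 0 →
      a ∈ {a : ℝ≥0 | G1' a < G1 a} ∧ b ∈ {b : ℝ≥0 | g' a b < g a b} := by
    intro a b hne
    have h1 := hblock a b
    have h2 := hgbd a b
    have h3 := hgh1 a b
    constructor
    · simp only [Set.mem_setOf_eq]; omega
    · simp only [Set.mem_setOf_eq]; omega
  set F : ℝ≥0 × ℝ≥0 → ℝ :=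
    fun p => (blockFn dX dZ p.1 p.2 : ℝ) * |(p.1 : ℝ) - (p.2 : ℝ)| ^ q with hFdef
  have hsupp : Function.support F ⊆
      {a : ℝ≥0 | G1' a < G1 a} ×ˢ (⋃ a ∈ {a : ℝ≥0 | G1' a < G1 a}, {b : ℝ≥0 | g' a b < g a b}) := by
    intro p hp
    rw [Function.mem_support] at hp
    have hbne : blockFn dX dZ p.1 p.2 ≠ 0 := by
      intro h0
      apply hp
      simp [hFdef, h0]
    obtain ⟨ha, hb⟩ := hbmem p.1 p.2 hbne
    exact Set.mem_prod.mpr ⟨ha, Set.mem_biUnion ha hb⟩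
  have hF : (Function.support F).Finite := (hSa.prod hT).subset hsupp
  rw [finsum_eq_sum F hF]
  set t := hF.toFinset with htdef
  set sA := hSa.toFinset
  set sB := hT.toFinset
  have hsub : t ⊆ sA ×ˢ sB := by
    intro p hp
    rw [htdef, Set.Finite.mem_toFinset] at hp
    have := hsupp hp
    rw [Set.mem_prod] at this
    rw [Finset.mem_product]
    exact ⟨(Set.Finite.mem_toFinset _).mpr this.1, (Set.Finite.mem_toFinset _).mpr this.2⟩
  -- natural number bound
  have key : ∑ p ∈ sA ×ˢ sB, blockFn dX dZ p.1 p.2 ≤ n - 1 := by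
    rw [Finset.sum_product]
    calc ∑ a ∈ sA, ∑ b ∈ sB, blockFn dX dZ a b
        ≤ ∑ a ∈ sA, (G1 a - G1' a) := by
          apply Finset.sum_le_sum
          intro a _
          calc ∑ b ∈ sB, blockFn dX dZ a b ≤ ∑ b ∈ sB, (g a b - g' a b) :=
                Finset.sum_le_sum (fun b _ => hblock a b)
            _ ≤ G1 a - G1' a := sum_jump_le (g a) (g' a) (hgh1 a) (hgh2 a) _ (hgbd a) sB
      _ ≤ n - 1 := sum_jump_le G1 G1' hG1h1 hG1h2 (n - 1) hG1bd sA
  have keyt : ∑ p ∈ t, blockFn dX dZ p.1 p.2 ≤ n - 1 :=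
    le_trans (Finset.sum_le_sum_of_subset hsub) key
  -- real bound
  have hterm : ∀ p ∈ t, F p ≤ (blockFn dX dZ p.1 p.2 : ℝ) * (ε : ℝ) ^ q := by
    intro p _
    by_cases hbz : blockFn dX dZ p.1 p.2 = 0
    · simp [hFdef, hbz]
    · have habs : |(p.1 : ℝ) - (p.2 : ℝ)| ≤ (ε : ℝ) := by
        by_contra hcon
        exact hbz (blockFn_eq_zero dX dZ ε hε h p.1 p.2 hcon)
      rw [hFdef]
      exact mul_le_mul_of_nonneg_left (pow_le_pow_left₀ (abs_nonneg _) habs q)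
        (by positivity)
  have hcast : ((n - 1 : ℕ) : ℝ) = (n : ℝ) - 1 := by
    rw [Nat.cast_sub hn]; simp
  have hS1 : ∑ p ∈ t, F p ≤ ((n : ℝ) - 1) * (ε : ℝ) ^ q := by
    calc ∑ p ∈ t, F p ≤ ∑ p ∈ t, (blockFn dX dZ p.1 p.2 : ℝ) * (ε : ℝ) ^ q :=
          Finset.sum_le_sum hterm
      _ = (∑ p ∈ t, (blockFn dX dZ p.1 p.2 : ℝ)) * (ε : ℝ) ^ q := by
          rw [Finset.sum_mul]
      _ ≤ ((n : ℝ) - 1) * (ε : ℝ) ^ q := by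
          apply mul_le_mul_of_nonneg_right _ (by positivity)
          rw [← Nat.cast_sum, ← hcast]
          exact_mod_cast keyt
  have hS0 : (0 : ℝ) ≤ ∑ p ∈ t, F p := by
    apply Finset.sum_nonneg
    intro p _
    rw [hFdef]
    positivity
  have hq0 : (q : ℝ) ≠ 0 := Nat.cast_ne_zero.mpr (by omega)
  have h1q : (0 : ℝ) ≤ 1 / q := by positivity
  have hn1 : (0 : ℝ) ≤ (n : ℝ) - 1 := by
    have : (1 : ℝ) ≤ n := by exact_mod_cast hn
    linarith
  calc (∑ p ∈ t, F p) ^ ((1 : ℝ) / q)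
      ≤ (((n : ℝ) - 1) * (ε : ℝ) ^ q) ^ ((1 : ℝ) / q) := Real.rpow_le_rpow hS0 hS1 h1q
    _ = ((n : ℝ) - 1) ^ ((1 : ℝ) / q) * ((ε : ℝ) ^ q) ^ ((1 : ℝ) / q) :=
        Real.mul_rpow hn1 (by positivity)
    _ = ((n : ℝ) - 1) ^ ((1 : ℝ) / q) * ε := by
        rw [← Real.rpow_natCast (ε : ℝ) q, ← Real.rpow_mul ε.coe_nonneg,
          mul_one_div, div_self hq0, Real.rpow_one]
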